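/- Let σ be a regular infinite cardinal. Suppose {A_α : α < κ} is a point-finite family of sets satisfying |A_α| ≤ σ⁺ for each α and |A_α ∩ A_β| ≤ σ for each pair of distinct α, β < κ. Then there are sets A'_α ⊆ A_α with |A'_α| ≤ σ for each α such that the family {A_α \ A'_α : α < κ} is pairwise disjoint. -/

import Mathlib

set_option autoImplicit false
open Cardinal

universe u v

/-- A family `⟨A_α⟩_{α ∈ ι}` of sets is point-`< τ` if for every index set `I ⊆ ι` of
cardinality `τ` the intersection `⋂_{α ∈ I} A_α` is empty. -/
def PointLt {ι : Type u} {X : Type v} (τ : Cardinal.{u}) (A : ι → Set X) : Prop :=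
  ∀ I : Set ι, Cardinal.mk I = τ → ⋂ α ∈ I, A α = ∅

private lemma mk_biUnion_le_of {Y Z : Type u} (s : Set Y) (S : Y → Set Z) {c : Cardinal.{u}}
    (h : ∀ y ∈ s, #(S y) ≤ c) : #(⋃ y ∈ s, S y) ≤ #s * c := by
  rw [Set.biUnion_eq_iUnion]
  refine Cardinal.mk_iUnion_le_sum_mk.trans ?_
  calc Cardinal.sum (fun y : s => #(S (y : Y)))
      ≤ Cardinal.sum (fun _ : s => c) := Cardinal.sum_le_sum _ _ fun y => h y y.2
    _ = #s * c := Cardinal.sum_const' _ _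

set_option maxHeartbeats 1000000 in
/-- The single-universe core of the refinement theorem. -/
private lemma core {ι X : Type u} (σ : Cardinal.{u}) (hσ : ℵ₀ ≤ σ) (A : ι → Set X)
    (hpf : ∀ x : X, {α | x ∈ A α}.Finite)
    (hcard : ∀ α, #(A α) ≤ Order.succ σ)
    (hint : ∀ α β, α ≠ β → #↥(A α ∩ A β) ≤ σ) :
    ∃ A' : ι → Set X, (∀ α, A' α ⊆ A α ∧ #(A' α) ≤ σ) ∧
      ∀ α β, α ≠ β → Disjoint (A α \ A' α) (A β \ A' β) := by
  classical
  set τ := Order.succ σ with hτdef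
  have hστ : σ ≤ τ := Order.le_succ σ
  have hτ : ℵ₀ ≤ τ := hσ.trans hστ
  -- the adjacency relation
  set N : ι → ι → Prop := fun α β => α ≠ β ∧ (A α ∩ A β).Nonempty with hNdef
  have hNsymm : ∀ {a b : ι}, N a b → N b a := by
    rintro a b ⟨h, x, hx1, hx2⟩; exact ⟨h.symm, x, hx2, hx1⟩
  -- degree bound
  have hW : ∀ α, #{β | N α β} ≤ τ := by
    intro α
    have hsub : {β | N α β} ⊆ ⋃ x ∈ A α, {β | (x : X) ∈ A β} := by
      rintro β ⟨_, x, hx1, hx2⟩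
      exact Set.mem_biUnion hx1 hx2
    refine (Cardinal.mk_le_mk_of_subset hsub).trans ?_
    refine (mk_biUnion_le_of (c := ℵ₀) _ _ fun x _ => ((hpf x).lt_aleph0).le).trans ?_
    calc #(A α) * ℵ₀ ≤ τ * ℵ₀ := mul_le_mul_left (hcard α) _
      _ = τ := Cardinal.mul_eq_left hτ hτ Cardinal.aleph0_ne_zero
  -- reachability classes have size at most `τ`
  have hreach : ∀ α : ι, #{β | Relation.ReflTransGen N α β} ≤ τ := by
    intro α
    set C : ℕ → Set ι :=
      fun n => Nat.rec {α} (fun _ p => ⋃ β ∈ p, insert β {γ | N β γ}) n with hCdef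
    have hC0 : C 0 = {α} := rfl
    have hCs : ∀ n, C (n + 1) = ⋃ β ∈ C n, insert β {γ | N β γ} := fun n => rfl
    have hCcard : ∀ n, #(C n) ≤ τ := by
      intro n
      induction n with
      | zero =>
        rw [hC0, Cardinal.mk_singleton]
        exact (Cardinal.one_lt_aleph0.le).trans hτ
      | succ n ih =>
        rw [hCs]
        refine (mk_biUnion_le_of (c := τ) _ _ (fun β _ => ?_)).trans ?_
        · refine Cardinal.mk_insert_le.trans ?_
          calc #{γ | N β γ} + 1 ≤ τ + 1 := add_le_add_left (hW β) 1
            _ = τ := Cardinal.add_one_eq hτ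
        · calc #(C n) * τ ≤ τ * τ := mul_le_mul_left ih τ
            _ = τ := Cardinal.mul_eq_self hτ
    have hsub : {β | Relation.ReflTransGen N α β} ⊆ ⋃ n, C n := by
      intro β hβ
      have hβ' : Relation.ReflTransGen N α β := hβ
      induction hβ' with
      | refl => exact Set.mem_iUnion.2 ⟨0, by rw [hC0]; exact rfl⟩
      | tail h1 h2 ih =>
        obtain ⟨n, hn⟩ := Set.mem_iUnion.1 (ih h1)
        refine Set.mem_iUnion.2 ⟨n + 1, ?_⟩
        rw [hCs]
        exact Set.mem_biUnion hn (Set.mem_insert_iff.2 (Or.inr h2))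
    have hUeq : (⋃ n, C n) = ⋃ m : ULift.{u} ℕ, C m.down := by
      ext y
      simp only [Set.mem_iUnion]
      exact ⟨fun ⟨n, hn⟩ => ⟨⟨n⟩, hn⟩, fun ⟨m, hm⟩ => ⟨m.down, hm⟩⟩
    rw [hUeq] at hsub
    refine (Cardinal.mk_le_mk_of_subset hsub).trans ?_
    refine (Cardinal.mk_iUnion_le _).trans ?_
    calc #(ULift.{u} ℕ) * ⨆ m : ULift.{u} ℕ, #(C m.down) ≤ ℵ₀ * τ := by
          rw [Cardinal.mk_uLift, Cardinal.mk_nat, Cardinal.lift_aleph0]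
          exact mul_le_mul_right (ciSup_le' fun m : ULift.{u} ℕ => hCcard m.down) _
      _ ≤ τ * τ := mul_le_mul_left hτ τ
      _ = τ := Cardinal.mul_eq_self hτ
  -- the setoid of connectivity components
  set st : Setoid ι :=
    ⟨Relation.ReflTransGen N,
      ⟨fun _ => Relation.ReflTransGen.refl,
        fun h => (@Relation.ReflTransGen.symmetric _ N ⟨fun _ _ hh => hNsymm hh⟩).symm _ _ h,
        fun h1 h2 => h1.trans h2⟩⟩ with hstdef
  set rep : ι → ι := fun α => (Quotient.mk st α).out with hrepdef
  have hrep1 : ∀ α, Relation.ReflTransGen N (rep α) α := by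
    intro α
    have h := Quotient.mk_out (s := st) α
    exact h
  have hrep2 : ∀ {a b : ι}, Relation.ReflTransGen N a b → rep a = rep b := by
    intro a b hab
    have : Quotient.mk st a = Quotient.mk st b := Quotient.sound hab
    simp only [hrepdef, this]
  -- the well-ordered target type of size `τ`
  set T := (τ.ord).ToType with hTdef
  have hTcard : #T = τ := Cardinal.mk_ord_toType τ
  have hTne : Nonempty T :=
    Cardinal.mk_ne_zero_iff.1 (by rw [hTcard]; exact (Cardinal.aleph0_pos.trans_le hτ).ne')
  have hembex : ∀ ρ : ι, Nonempty ({β | Relation.ReflTransGen N ρ β} ↪ T) :=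
    fun ρ => (Cardinal.le_def _ _).1 ((hreach ρ).trans_eq hTcard.symm)
  set f : ι → ι → T := fun ρ β =>
    if h : Relation.ReflTransGen N ρ β then (hembex ρ).some ⟨β, h⟩ else hTne.some with hfdef
  set g : ι → T := fun β => f (rep β) β with hgdef
  -- `g` is injective on each connectivity component
  have hginj : ∀ a b : ι, Relation.ReflTransGen N a b → g a = g b → a = b := by
    intro a b hab hg
    have hrab : rep a = rep b := hrep2 hab
    have ha : Relation.ReflTransGen N (rep a) a := hrep1 a
    have hb : Relation.ReflTransGen N (rep a) b := by rw [hrab]; exact hrep1 b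
    have hg' : f (rep a) a = f (rep a) b := by
      simpa only [hgdef, hrab] using hg
    rw [hfdef] at hg'
    simp only [dif_pos ha, dif_pos hb] at hg'
    have := (hembex (rep a)).some.injective hg'
    exact Subtype.mk_eq_mk.1 this
  -- the sets of "earlier neighbours"
  set P : ι → Set ι := fun α => {β | N α β ∧ g β < g α} with hPdef
  have hPcard : ∀ α, #(P α) ≤ σ := by
    intro α
    have hinj : Function.Injective (fun β : P α => (⟨g β, β.2.2⟩ : Set.Iio (g α))) := by
      intro β β' h
      have hgβ : g (β : ι) = g (β' : ι) := congrArg Subtype.val h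
      have hE : Relation.ReflTransGen N (β : ι) (β' : ι) :=
        (Relation.ReflTransGen.single (hNsymm β.2.1)).trans
          (Relation.ReflTransGen.single β'.2.1)
      exact Subtype.ext (hginj _ _ hE hgβ)
    have h1 : #(P α) ≤ #(Set.Iio (g α)) := Cardinal.mk_le_of_injective hinj
    have h2 : #(Set.Iio (g α)) < τ := Cardinal.mk_Iio_ord_toType (g α)
    exact Order.lt_succ_iff.1 (h1.trans_lt h2)
  refine ⟨fun α => ⋃ β ∈ P α, (A α ∩ A β), fun α => ⟨?_, ?_⟩, ?_⟩
  · exact Set.iUnion₂_subset fun β _ => Set.inter_subset_left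
  · refine (mk_biUnion_le_of (c := σ) _ _ fun β hβ => hint α β hβ.1.1).trans ?_
    calc #(P α) * σ ≤ σ * σ := mul_le_mul_left (hPcard α) σ
      _ = σ := Cardinal.mul_eq_self hσ
  · intro α β hne
    rw [Set.disjoint_left]
    rintro x ⟨hxa, hxa'⟩ ⟨hxb, hxb'⟩
    have hN : N α β := ⟨hne, x, hxa, hxb⟩
    have hgne : g α ≠ g β := fun h => hne (hginj α β (Relation.ReflTransGen.single hN) h)
    rcases lt_or_gt_of_ne hgne with h | h
    · exact hxb' (Set.mem_biUnion (show α ∈ P β from ⟨hNsymm hN, h⟩) ⟨hxb, hxa⟩)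
    · exact hxa' (Set.mem_biUnion (show β ∈ P α from ⟨hN, h⟩) ⟨hxa, hxb⟩)

/-- Let `σ` be a regular infinite cardinal.  If `⟨A_α⟩` is a point-finite family of sets
with `|A_α| ≤ σ⁺` and `|A_α ∩ A_β| ≤ σ` for distinct `α, β`, then one can remove a set of
size at most `σ` from each `A_α` so that the family becomes pairwise disjoint. -/
theorem pointFinite_refine_disjoint {ι : Type u} {X : Type v}
    (σ : Cardinal.{v}) (hσ : σ.IsRegular)
    (A : ι → Set X)
    (hpf : PointLt ℵ₀ A)
    (hcard : ∀ α, Cardinal.mk (A α) ≤ Order.succ σ)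
    (hint : ∀ α β, α ≠ β → Cardinal.mk ↥(A α ∩ A β) ≤ σ) :
    ∃ A' : ι → Set X, (∀ α, A' α ⊆ A α ∧ Cardinal.mk (A' α) ≤ σ) ∧
      ∀ α β, α ≠ β → Disjoint (A α \ A' α) (A β \ A' β) := by
  classical
  -- point-finiteness
  have hfin : ∀ x : X, {α | x ∈ A α}.Finite := by
    intro x
    by_contra h
    have hinf : Set.Infinite {α | x ∈ A α} := h
    set e := hinf.natEmbedding with hedef
    set t : Set ι := Set.range (Subtype.val ∘ ⇑e) with htdef
    have htsub : t ⊆ {α | x ∈ A α} := by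
      rintro α ⟨n, rfl⟩; exact (e n).2
    have htcard : Cardinal.mk t = ℵ₀ := by
      have hinj : Function.Injective (Subtype.val ∘ ⇑e) :=
        Subtype.val_injective.comp e.injective
      have h1 : t.Countable := Set.countable_range _
      have h2 : t.Infinite := Set.infinite_range_of_injective hinj
      have := h1.to_subtype
      have := h2.to_subtype
      exact Cardinal.mk_eq_aleph0 _
    have := hpf t htcard
    have hx : x ∈ ⋂ α ∈ t, A α := Set.mem_iInter₂.2 fun α hα => htsub hα
    rw [this] at hx
    exact hx
  -- transfer to a common universe
  let ι' := ULift.{v} ι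
  let X' := ULift.{u} X
  have mkeq : ∀ s : Set X, #{x : X' | x.down ∈ s} = Cardinal.lift.{u} #s := by
    intro s
    have e : {x : X' | x.down ∈ s} ≃ ULift.{u} s :=
      ⟨fun x => ⟨⟨x.1.down, x.2⟩⟩, fun y => ⟨⟨y.down.1⟩, y.down.2⟩,
        fun x => rfl, fun y => rfl⟩
    rw [Cardinal.mk_congr e, Cardinal.mk_uLift]
  obtain ⟨B, hB1, hB2⟩ :=
    core (Cardinal.lift.{u} σ)
      (by
        have h : Cardinal.lift.{u, v} ℵ₀ ≤ Cardinal.lift.{u, v} σ :=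
          Cardinal.lift_le.2 hσ.aleph0_le
        simpa using h)
      (fun a : ι' => {x : X' | x.down ∈ A a.down})
      (fun x => (hfin x.down).preimage (ULift.down_injective.injOn))
      (fun a => by
        rw [mkeq]
        calc Cardinal.lift.{u} #(A a.down) ≤ Cardinal.lift.{u} (Order.succ σ) :=
            Cardinal.lift_le.2 (hcard a.down)
          _ = Order.succ (Cardinal.lift.{u} σ) := Cardinal.lift_succ σ)
      (fun a b hab => by
        have hd : a.down ≠ b.down := fun h => hab (ULift.down_injective h)
        have hseteq : {x : X' | x.down ∈ A a.down} ∩ {x : X' | x.down ∈ A b.down}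
            = {x : X' | x.down ∈ (A a.down ∩ A b.down)} := rfl
        rw [hseteq, mkeq]
        exact Cardinal.lift_le.2 (hint a.down b.down hd))
  refine ⟨fun α => {x : X | ULift.up x ∈ B (ULift.up α)}, fun α => ⟨?_, ?_⟩, ?_⟩
  · intro x hx
    exact (hB1 (ULift.up α)).1 hx
  · have hBeq : B (ULift.up α) = {x : X' | x.down ∈ {y : X | ULift.up y ∈ B (ULift.up α)}} := by
      ext x
      constructor
      · intro hx; exact hx
      · intro hx; exact hx
    have := (hB1 (ULift.up α)).2
    rw [hBeq, mkeq] at this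
    exact Cardinal.lift_le.1 this
  · intro α β hne
    have hne' : (ULift.up α : ι') ≠ ULift.up β := fun h => hne (congrArg ULift.down h)
    have hd := hB2 (ULift.up α) (ULift.up β) hne'
    rw [Set.disjoint_left] at hd ⊢
    rintro x ⟨hxa, hxa'⟩ ⟨hxb, hxb'⟩
    exact hd (a := ULift.up x) ⟨hxa, hxa'⟩ ⟨hxb, hxb'⟩
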